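/- If 4 ≤ n ≤ 8 and the system (★) holds, then l ≤ 2. (This is the algebraic heart of the classification: a locally conformal flat Riemannian manifold of dimension 4 ≤ n ≤ 8 with constant Ricci eigenvalues has at most two distinct Ricci eigenvalues.) -/

import Mathlib

set_option maxHeartbeats 800000


open Finset

private lemma star_aux3 (n M mb mc : ℕ) (hn8 : n ≤ 8) (hs : M + mb + mc = n)
    (hbig : n < 2 * M) (hmb : 0 < mb) (hmc : 0 < mc)
    (a b c : ℝ) (ha : a ≠ 0)
    (hD1 : (M:ℝ)*((n:ℝ)-(M:ℝ))*a + (mb:ℝ)*((n:ℝ)-(mb:ℝ))*b + (mc:ℝ)*((n:ℝ)-(mc:ℝ))*c = 0)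
    (hD2 : (M:ℝ)*((n:ℝ)-(M:ℝ))*(a*a) + (mb:ℝ)*((n:ℝ)-(mb:ℝ))*(b*b) + (mc:ℝ)*((n:ℝ)-(mc:ℝ))*(c*c)
      = (((M:ℝ)*a)*((M:ℝ)*a) + ((mb:ℝ)*b)*((mb:ℝ)*b) + ((mc:ℝ)*c)*((mc:ℝ)*c))
        - ((M:ℝ)*a + (mb:ℝ)*b + (mc:ℝ)*c)*((M:ℝ)*a + (mb:ℝ)*b + (mc:ℝ)*c)) :
    False := by
  have ha2 : 0 < a * a := mul_self_pos.mpr ha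
  have hb : mb = 1 ∨ mb = 2 := by omega
  have hc : mc = 1 ∨ mc = 2 := by omega
  rcases hb with hb|hb <;> rcases hc with hc|hc <;> subst hb <;> subst hc
  -- (1,1)
  · have hn : n = 5 ∨ n = 6 ∨ n = 7 ∨ n = 8 := by omega
    rcases hn with hn|hn|hn|hn <;> subst hn
    · have hM : M = 3 := by omega
      subst hM; norm_num at hD1 hD2
      have hfin : 84*(a*a) + 48*((b-c)*(b-c)) = 0 := by
        linear_combination 32*hD2 + (-18*a - 20*b - 20*c)*hD1
      linarith [hfin, ha2, mul_self_nonneg (b-c)]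
    · have hM : M = 4 := by omega
      subst hM; norm_num at hD1 hD2
      have hfin : 144*(a*a) + 100*((b-c)*(b-c)) = 0 := by
        linear_combination 50*hD2 + (-32*a - 30*b - 30*c)*hD1
      linarith [hfin, ha2, mul_self_nonneg (b-c)]
    · have hM : M = 5 := by omega
      subst hM; norm_num at hD1 hD2
      have hfin : 220*(a*a) + 180*((b-c)*(b-c)) = 0 := by
        linear_combination 72*hD2 + (-50*a - 42*b - 42*c)*hD1
      linarith [hfin, ha2, mul_self_nonneg (b-c)]
    · have hM : M = 6 := by omega
      subst hM; norm_num at hD1 hD2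
      have hfin : 312*(a*a) + 294*((b-c)*(b-c)) = 0 := by
        linear_combination 98*hD2 + (-72*a - 56*b - 56*c)*hD1
      linarith [hfin, ha2, mul_self_nonneg (b-c)]
  -- (1,2)
  · have hn : n = 7 ∨ n = 8 := by omega
    rcases hn with hn|hn <;> subst hn
    · have hM : M = 4 := by omega
      subst hM; norm_num at hD1 hD2
      have hG : 56*(b*b + c*c) + 4*((b-c)*(b-c)) = 0 := by
        linear_combination 12*hD2 + (-12*a - 2*b - 6*c)*hD1
      have hKey : 144*(a*a) = (6*b+10*c)*(6*b+10*c) := by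
        linear_combination (12*a - 6*b - 10*c)*hD1
      linarith [hG, hKey, ha2, mul_self_nonneg (b-c), mul_self_nonneg (6*b-10*c),
        mul_self_nonneg b, mul_self_nonneg c]
    · have hM : M = 5 := by omega
      subst hM; norm_num at hD1 hD2
      have hG : 68*(b*b + c*c) + 16*((b-c)*(b-c)) = 0 := by
        linear_combination 15*hD2 + (-15*a - 3*b - 8*c)*hD1
      have hKey : 225*(a*a) = (7*b+12*c)*(7*b+12*c) := by
        linear_combination (15*a - 7*b - 12*c)*hD1
      linarith [hG, hKey, ha2, mul_self_nonneg (b-c), mul_self_nonneg (7*b-12*c),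
        mul_self_nonneg b, mul_self_nonneg c]
  -- (2,1)
  · have hn : n = 7 ∨ n = 8 := by omega
    rcases hn with hn|hn <;> subst hn
    · have hM : M = 4 := by omega
      subst hM; norm_num at hD1 hD2
      have hG : 56*(b*b + c*c) + 4*((b-c)*(b-c)) = 0 := by
        linear_combination 12*hD2 + (-12*a - 6*b - 2*c)*hD1
      have hKey : 144*(a*a) = (10*b+6*c)*(10*b+6*c) := by
        linear_combination (12*a - 10*b - 6*c)*hD1
      linarith [hG, hKey, ha2, mul_self_nonneg (b-c), mul_self_nonneg (10*b-6*c),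
        mul_self_nonneg b, mul_self_nonneg c]
    · have hM : M = 5 := by omega
      subst hM; norm_num at hD1 hD2
      have hG : 68*(b*b + c*c) + 16*((b-c)*(b-c)) = 0 := by
        linear_combination 15*hD2 + (-15*a - 8*b - 3*c)*hD1
      have hKey : 225*(a*a) = (12*b+7*c)*(12*b+7*c) := by
        linear_combination (15*a - 12*b - 7*c)*hD1
      linarith [hG, hKey, ha2, mul_self_nonneg (b-c), mul_self_nonneg (12*b-7*c),
        mul_self_nonneg b, mul_self_nonneg c]
  -- (2,2) impossible
  · omega

private lemma star_aux4 (n M mb mc md : ℕ) (hn8 : n ≤ 8) (hs : M + mb + mc + md = n)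
    (hbig : n < 2 * M) (hmb : 0 < mb) (hmc : 0 < mc) (hmd : 0 < md)
    (a b c d : ℝ) (ha : a ≠ 0)
    (hD1 : (M:ℝ)*((n:ℝ)-(M:ℝ))*a + (mb:ℝ)*((n:ℝ)-(mb:ℝ))*b + (mc:ℝ)*((n:ℝ)-(mc:ℝ))*c
        + (md:ℝ)*((n:ℝ)-(md:ℝ))*d = 0)
    (hD2 : (M:ℝ)*((n:ℝ)-(M:ℝ))*(a*a) + (mb:ℝ)*((n:ℝ)-(mb:ℝ))*(b*b) + (mc:ℝ)*((n:ℝ)-(mc:ℝ))*(c*c)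
        + (md:ℝ)*((n:ℝ)-(md:ℝ))*(d*d)
      = (((M:ℝ)*a)*((M:ℝ)*a) + ((mb:ℝ)*b)*((mb:ℝ)*b) + ((mc:ℝ)*c)*((mc:ℝ)*c) + ((md:ℝ)*d)*((md:ℝ)*d))
        - ((M:ℝ)*a + (mb:ℝ)*b + (mc:ℝ)*c + (md:ℝ)*d)*((M:ℝ)*a + (mb:ℝ)*b + (mc:ℝ)*c + (md:ℝ)*d)) :
    False := by
  have ha2 : 0 < a * a := mul_self_pos.mpr ha
  have hb : mb = 1 := by omega
  have hc : mc = 1 := by omega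
  have hd : md = 1 := by omega
  subst hb; subst hc; subst hd
  have hn : n = 7 ∨ n = 8 := by omega
  rcases hn with hn|hn <;> subst hn
  · have hM : M = 4 := by omega
    subst hM; norm_num at hD1 hD2
    have hT : 48*(a*a) + 18*(b*b+c*c+d*d) - 24*(b*c+b*d+c*d) = 0 := by
      linear_combination 6*hD2 + (-2*a - 3*b - 3*c - 3*d)*hD1
    have hKey : 36*(b*b+c*c+d*d) + 72*(b*c+b*d+c*d) - 144*(a*a) = 0 := by
      linear_combination (6*b + 6*c + 6*d - 12*a)*hD1
    linarith [hT, hKey, ha2, mul_self_nonneg (b-c), mul_self_nonneg (b-d), mul_self_nonneg (c-d),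
      mul_self_nonneg b, mul_self_nonneg c, mul_self_nonneg d]
  · have hM : M = 5 := by omega
    subst hM; norm_num at hD1 hD2
    have hT : 45*(a*a) + 7*(b*b+c*c+d*d) - 22*(b*c+b*d+c*d) = 0 := by
      linear_combination 3*hD2 + (-2*b - 2*c - 2*d)*hD1
    have hKey : 49*(b*b+c*c+d*d) + 98*(b*c+b*d+c*d) - 225*(a*a) = 0 := by
      linear_combination (7*b + 7*c + 7*d - 15*a)*hD1
    linarith [hT, hKey, ha2, mul_self_nonneg (b-c), mul_self_nonneg (b-d), mul_self_nonneg (c-d),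
      mul_self_nonneg b, mul_self_nonneg c, mul_self_nonneg d]

/-- Algebraic heart of the classification: if `4 ≤ n ≤ 8` and the system (★)
`n - m_k = 2 u_k Σ_{j≠k} m_j/(u_k - u_j)` holds for pairwise distinct reals
`u_1, …, u_l` with positive multiplicities `m_k` summing to `n`, then `l ≤ 2`.
Thus a locally conformal flat Riemannian manifold of dimension `4 ≤ n ≤ 8`
with constant Ricci eigenvalues has at most two distinct Ricci eigenvalues. -/
theorem star_system_dim_le_eight
    (n l : ℕ) (hn4 : 4 ≤ n) (hn8 : n ≤ 8) (hl : 0 < l)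
    (m : Fin l → ℕ) (hm : ∀ k, 0 < m k) (hsum : ∑ k, m k = n)
    (u : Fin l → ℝ) (hu : Function.Injective u)
    (hstar : ∀ k, (n : ℝ) - (m k : ℝ) =
      2 * u k * ∑ j ∈ univ.erase k, (m j : ℝ) / (u k - u j)) :
    l ≤ 2 := by

  by_contra hl2
  push_neg at hl2
  -- all eigenvalues are nonzero
  have hu0 : ∀ k, u k ≠ 0 := by
    intro k hk
    have h0 : (n:ℝ) - (m k : ℝ) = 0 := by rw [hstar k, hk]; ring
    have hmk : m k = n := by
      have h1 : (m k : ℝ) = (n : ℝ) := by linarith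
      exact_mod_cast h1
    have hcard : 1 < Fintype.card (Fin l) := by
      rw [Fintype.card_fin]; omega
    obtain ⟨j, hj⟩ := Fintype.exists_ne_of_one_lt_card hcard k
    have h2 : ∑ i ∈ univ.erase k, m i + m k = ∑ i, m i :=
      Finset.sum_erase_add _ _ (mem_univ k)
    have h3 : m j ≤ ∑ i ∈ univ.erase k, m i :=
      Finset.single_le_sum (f := m) (fun i _ => Nat.zero_le _)
        (Finset.mem_erase.mpr ⟨hj, mem_univ j⟩)
    have := hm j
    omega
  have hsub : ∀ {k j : Fin l}, j ≠ k → u k - u j ≠ 0 := by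
    intro k j h
    exact sub_ne_zero.mpr (hu.ne h.symm)
  have hsumR : ∑ i, (m i : ℝ) = (n:ℝ) := by exact_mod_cast hsum
  have herase : ∀ k : Fin l, ∑ j ∈ univ.erase k, (m j:ℝ) = (n:ℝ) - (m k:ℝ) := by
    intro k; rw [Finset.sum_erase_eq_sub (mem_univ k), hsumR]
  have heraseU : ∀ k : Fin l, ∑ j ∈ univ.erase k, (m j:ℝ) * u j
      = (∑ i, (m i:ℝ) * u i) - (m k:ℝ) * u k :=
    fun k => Finset.sum_erase_eq_sub (mem_univ k)
  have hoff : ∀ g : Fin l → Fin l → ℝ,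
      (∑ k, ∑ j ∈ univ.erase k, g k j) = (∑ k, ∑ j, g k j) - ∑ k, g k k := by
    intro g
    rw [← Finset.sum_sub_distrib]
    exact Finset.sum_congr rfl fun k _ => Finset.sum_erase_eq_sub (mem_univ k)
  have hswap : ∀ g : Fin l → Fin l → ℝ,
      (∑ k, ∑ j ∈ univ.erase k, g k j) = ∑ k, ∑ j ∈ univ.erase k, g j k := by
    intro g
    have h1 := hoff g
    have h2 := hoff (fun k j => g j k)
    rw [h1, h2, Finset.sum_comm]
  have hmulsum : ∀ (k : Fin l) (w : ℝ), (m k:ℝ) * ((n:ℝ) - (m k:ℝ)) * w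
      = ∑ j ∈ univ.erase k, 2*((m k:ℝ)*(m j:ℝ))*(u k * w)/(u k - u j) := by
    intro k w
    calc (m k:ℝ) * ((n:ℝ) - (m k:ℝ)) * w
        = ((m k:ℝ) * w) * ((n:ℝ) - (m k:ℝ)) := by ring
      _ = ((m k:ℝ) * w) * (2 * u k * ∑ j ∈ univ.erase k, (m j:ℝ) / (u k - u j)) := by
          rw [← hstar k]
      _ = (2*(m k:ℝ)*(u k * w)) * ∑ j ∈ univ.erase k, (m j:ℝ)/(u k - u j) := by ring
      _ = ∑ j ∈ univ.erase k, (2*(m k:ℝ)*(u k * w)) * ((m j:ℝ)/(u k - u j)) := by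
          rw [Finset.mul_sum]
      _ = ∑ j ∈ univ.erase k, 2*((m k:ℝ)*(m j:ℝ))*(u k * w)/(u k - u j) :=
          Finset.sum_congr rfl fun j _ => by ring
  -- Identity D1 : ∑ m_k (n - m_k) u_k = 0
  have hD1 : ∑ k, (m k:ℝ) * ((n:ℝ) - (m k:ℝ)) * u k = 0 := by
    have h1 : ∑ k, (m k:ℝ) * ((n:ℝ) - (m k:ℝ)) * u k
        = ∑ k, ∑ j ∈ univ.erase k, 2*((m k:ℝ)*(m j:ℝ))*(u k * u k)/(u k - u j) :=
      Finset.sum_congr rfl fun k _ => hmulsum k (u k)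
    have hsw := hswap (fun k j => 2*((m k:ℝ)*(m j:ℝ))*(u k * u k)/(u k - u j))
    have h2 : (∑ k, ∑ j ∈ univ.erase k, 2*((m k:ℝ)*(m j:ℝ))*(u k * u k)/(u k - u j))
          + (∑ k, ∑ j ∈ univ.erase k, 2*((m k:ℝ)*(m j:ℝ))*(u k * u k)/(u k - u j))
        = ∑ k, ∑ j ∈ univ.erase k, (2*((m k:ℝ)*(m j:ℝ))*(u k * u k)/(u k - u j)
            + 2*((m j:ℝ)*(m k:ℝ))*(u j * u j)/(u j - u k)) := by
      nth_rewrite 2 [hsw]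
      rw [← Finset.sum_add_distrib]
      exact Finset.sum_congr rfl fun k _ => (Finset.sum_add_distrib).symm
    have h3 : ∑ k, ∑ j ∈ univ.erase k, (2*((m k:ℝ)*(m j:ℝ))*(u k * u k)/(u k - u j)
            + 2*((m j:ℝ)*(m k:ℝ))*(u j * u j)/(u j - u k))
        = ∑ k, ∑ j ∈ univ.erase k, (2*((m k:ℝ)*(m j:ℝ))*(u k) + 2*((m k:ℝ)*(m j:ℝ))*(u j)) := by
      refine Finset.sum_congr rfl fun k _ => Finset.sum_congr rfl fun j hj => ?_
      have hjk : j ≠ k := Finset.ne_of_mem_erase hj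
      have e1 : u k - u j ≠ 0 := hsub hjk
      have e2 : u j - u k ≠ 0 := hsub hjk.symm
      field_simp
      ring
    have h4 : ∑ k, ∑ j ∈ univ.erase k, (2*((m k:ℝ)*(m j:ℝ))*(u k) + 2*((m k:ℝ)*(m j:ℝ))*(u j))
        = 4 * ∑ k, (m k:ℝ) * ((n:ℝ) - (m k:ℝ)) * u k := by
      have hfirst : ∑ k, ∑ j ∈ univ.erase k, 2*((m k:ℝ)*(m j:ℝ))*(u k)
          = 2 * ∑ k, (m k:ℝ)*((n:ℝ)-(m k:ℝ))*(u k) := by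
        rw [Finset.mul_sum]
        refine Finset.sum_congr rfl fun k _ => ?_
        calc ∑ j ∈ univ.erase k, 2*((m k:ℝ)*(m j:ℝ))*(u k)
            = ∑ j ∈ univ.erase k, (2*(m k:ℝ)*(u k)) * (m j:ℝ) :=
              Finset.sum_congr rfl fun j _ => by ring
          _ = (2*(m k:ℝ)*(u k)) * ∑ j ∈ univ.erase k, (m j:ℝ) := by rw [Finset.mul_sum]
          _ = (2*(m k:ℝ)*(u k)) * ((n:ℝ) - (m k:ℝ)) := by rw [herase k]
          _ = 2 * ((m k:ℝ)*((n:ℝ)-(m k:ℝ))*(u k)) := by ring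
      have hsw2 := hswap (fun k j => 2*((m k:ℝ)*(m j:ℝ))*(u k))
      have hsecond : ∑ k, ∑ j ∈ univ.erase k, 2*((m k:ℝ)*(m j:ℝ))*(u j)
          = ∑ k, ∑ j ∈ univ.erase k, 2*((m k:ℝ)*(m j:ℝ))*(u k) := by
        calc ∑ k, ∑ j ∈ univ.erase k, 2*((m k:ℝ)*(m j:ℝ))*(u j)
            = ∑ k, ∑ j ∈ univ.erase k, 2*((m j:ℝ)*(m k:ℝ))*(u j) :=
              Finset.sum_congr rfl fun k _ => Finset.sum_congr rfl fun j _ => by ring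
          _ = ∑ k, ∑ j ∈ univ.erase k, 2*((m k:ℝ)*(m j:ℝ))*(u k) := hsw2.symm
      rw [Finset.sum_congr rfl (fun k _ => Finset.sum_add_distrib), Finset.sum_add_distrib,
        hsecond, hfirst]
      ring
    linarith [h1, h2, h3, h4]
  -- Identity D2 : ∑ m_k (n - m_k) u_k² = ∑ (m_k u_k)² - (∑ m_k u_k)²
  have hD2 : ∑ k, (m k:ℝ)*((n:ℝ)-(m k:ℝ))*(u k * u k)
      = (∑ k, ((m k:ℝ)*u k)*((m k:ℝ)*u k))
        - (∑ k, (m k:ℝ)*u k)*(∑ k, (m k:ℝ)*u k) := by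
    have h1 : ∑ k, (m k:ℝ) * ((n:ℝ) - (m k:ℝ)) * (u k * u k)
        = ∑ k, ∑ j ∈ univ.erase k, 2*((m k:ℝ)*(m j:ℝ))*(u k * (u k * u k))/(u k - u j) :=
      Finset.sum_congr rfl fun k _ => hmulsum k (u k * u k)
    have hsw := hswap (fun k j => 2*((m k:ℝ)*(m j:ℝ))*(u k * (u k * u k))/(u k - u j))
    have h2 : (∑ k, ∑ j ∈ univ.erase k, 2*((m k:ℝ)*(m j:ℝ))*(u k * (u k * u k))/(u k - u j))
          + (∑ k, ∑ j ∈ univ.erase k, 2*((m k:ℝ)*(m j:ℝ))*(u k * (u k * u k))/(u k - u j))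
        = ∑ k, ∑ j ∈ univ.erase k, (2*((m k:ℝ)*(m j:ℝ))*(u k * (u k * u k))/(u k - u j)
            + 2*((m j:ℝ)*(m k:ℝ))*(u j * (u j * u j))/(u j - u k)) := by
      nth_rewrite 2 [hsw]
      rw [← Finset.sum_add_distrib]
      exact Finset.sum_congr rfl fun k _ => (Finset.sum_add_distrib).symm
    have h3 : ∑ k, ∑ j ∈ univ.erase k, (2*((m k:ℝ)*(m j:ℝ))*(u k * (u k * u k))/(u k - u j)
            + 2*((m j:ℝ)*(m k:ℝ))*(u j * (u j * u j))/(u j - u k))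
        = ∑ k, ∑ j ∈ univ.erase k, (2*((m k:ℝ)*(m j:ℝ))*(u k * u k)
            + 2*((m k:ℝ)*(m j:ℝ))*(u k * u j) + 2*((m k:ℝ)*(m j:ℝ))*(u j * u j)) := by
      refine Finset.sum_congr rfl fun k _ => Finset.sum_congr rfl fun j hj => ?_
      have hjk : j ≠ k := Finset.ne_of_mem_erase hj
      have e1 : u k - u j ≠ 0 := hsub hjk
      have e2 : u j - u k ≠ 0 := hsub hjk.symm
      field_simp
      ring
    have hfirst : ∑ k, ∑ j ∈ univ.erase k, 2*((m k:ℝ)*(m j:ℝ))*(u k * u k)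
        = 2 * ∑ k, (m k:ℝ)*((n:ℝ)-(m k:ℝ))*(u k * u k) := by
      rw [Finset.mul_sum]
      refine Finset.sum_congr rfl fun k _ => ?_
      calc ∑ j ∈ univ.erase k, 2*((m k:ℝ)*(m j:ℝ))*(u k * u k)
          = ∑ j ∈ univ.erase k, (2*(m k:ℝ)*(u k * u k)) * (m j:ℝ) :=
            Finset.sum_congr rfl fun j _ => by ring
        _ = (2*(m k:ℝ)*(u k * u k)) * ∑ j ∈ univ.erase k, (m j:ℝ) := by rw [Finset.mul_sum]
        _ = (2*(m k:ℝ)*(u k * u k)) * ((n:ℝ) - (m k:ℝ)) := by rw [herase k]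
        _ = 2 * ((m k:ℝ)*((n:ℝ)-(m k:ℝ))*(u k * u k)) := by ring
    have hsw3 := hswap (fun k j => 2*((m k:ℝ)*(m j:ℝ))*(u k * u k))
    have hthird : ∑ k, ∑ j ∈ univ.erase k, 2*((m k:ℝ)*(m j:ℝ))*(u j * u j)
        = ∑ k, ∑ j ∈ univ.erase k, 2*((m k:ℝ)*(m j:ℝ))*(u k * u k) := by
      calc ∑ k, ∑ j ∈ univ.erase k, 2*((m k:ℝ)*(m j:ℝ))*(u j * u j)
          = ∑ k, ∑ j ∈ univ.erase k, 2*((m j:ℝ)*(m k:ℝ))*(u j * u j) :=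
            Finset.sum_congr rfl fun k _ => Finset.sum_congr rfl fun j _ => by ring
        _ = ∑ k, ∑ j ∈ univ.erase k, 2*((m k:ℝ)*(m j:ℝ))*(u k * u k) := hsw3.symm
    have hmid : ∑ k, ∑ j ∈ univ.erase k, 2*((m k:ℝ)*(m j:ℝ))*(u k * u j)
        = 2*((∑ i, (m i:ℝ)*u i)*(∑ i, (m i:ℝ)*u i))
          - 2*(∑ i, ((m i:ℝ)*u i)*((m i:ℝ)*u i)) := by
      have e1 : ∀ k : Fin l, ∑ j ∈ univ.erase k, 2*((m k:ℝ)*(m j:ℝ))*(u k * u j)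
          = (2*((m k:ℝ)*u k)) * (∑ i, (m i:ℝ)*u i)
            - (2*((m k:ℝ)*u k)) * ((m k:ℝ)*u k) := by
        intro k
        calc ∑ j ∈ univ.erase k, 2*((m k:ℝ)*(m j:ℝ))*(u k * u j)
            = ∑ j ∈ univ.erase k, (2*((m k:ℝ)*u k)) * ((m j:ℝ)*u j) :=
              Finset.sum_congr rfl fun j _ => by ring
          _ = (2*((m k:ℝ)*u k)) * ∑ j ∈ univ.erase k, ((m j:ℝ)*u j) := by rw [Finset.mul_sum]
          _ = (2*((m k:ℝ)*u k)) * ((∑ i, (m i:ℝ)*u i) - (m k:ℝ)*u k) := by rw [heraseU k]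
          _ = (2*((m k:ℝ)*u k)) * (∑ i, (m i:ℝ)*u i)
              - (2*((m k:ℝ)*u k)) * ((m k:ℝ)*u k) := by ring
      rw [Finset.sum_congr rfl (fun k _ => e1 k), Finset.sum_sub_distrib]
      have e2 : ∑ k, (2*((m k:ℝ)*u k)) * (∑ i, (m i:ℝ)*u i)
          = 2*((∑ i, (m i:ℝ)*u i)*(∑ i, (m i:ℝ)*u i)) := by
        rw [← Finset.sum_mul]
        have e3 : ∑ k, 2*((m k:ℝ)*u k) = 2 * ∑ k, (m k:ℝ)*u k := by
          rw [Finset.mul_sum]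
        rw [e3]; ring
      have e4 : ∑ k, (2*((m k:ℝ)*u k))*((m k:ℝ)*u k)
          = 2*(∑ i, ((m i:ℝ)*u i)*((m i:ℝ)*u i)) := by
        rw [Finset.mul_sum]
        exact Finset.sum_congr rfl fun k _ => by ring
      rw [e2, e4]
    have h4 : ∑ k, ∑ j ∈ univ.erase k, (2*((m k:ℝ)*(m j:ℝ))*(u k * u k)
            + 2*((m k:ℝ)*(m j:ℝ))*(u k * u j) + 2*((m k:ℝ)*(m j:ℝ))*(u j * u j))
        = (∑ k, ∑ j ∈ univ.erase k, 2*((m k:ℝ)*(m j:ℝ))*(u k * u k))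
          + (∑ k, ∑ j ∈ univ.erase k, 2*((m k:ℝ)*(m j:ℝ))*(u k * u j))
          + (∑ k, ∑ j ∈ univ.erase k, 2*((m k:ℝ)*(m j:ℝ))*(u j * u j)) := by
      rw [Finset.sum_congr rfl (fun k _ => Finset.sum_add_distrib),
        Finset.sum_congr rfl (fun k (_ : k ∈ univ) =>
          congrArg (· + ∑ j ∈ univ.erase k, 2*((m k:ℝ)*(m j:ℝ))*(u j * u j))
            Finset.sum_add_distrib),
        Finset.sum_add_distrib, Finset.sum_add_distrib]
    linarith [h1, h2, h3, h4, hfirst, hthird, hmid]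
    -- there is an eigenvalue of multiplicity > n/2
  have hbig : ∃ k0, n < 2 * m k0 := by
    by_contra hno
    push_neg at hno
    have hex : ∃ i : Fin l, 2 * m i < n := by
      by_contra h2
      push_neg at h2
      have h3 : ∀ i : Fin l, 2 * m i = n := fun i => le_antisymm (hno i) (h2 i)
      have h4 : ∑ i : Fin l, 2 * m i = l * n := by
        rw [Finset.sum_congr rfl fun i _ => h3 i, Finset.sum_const, Finset.card_univ,
          Fintype.card_fin, smul_eq_mul]
      have h5 : ∑ i : Fin l, 2 * m i = 2 * n := by rw [← Finset.mul_sum, hsum]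
      have h6 : 2 < l := hl2
      nlinarith [h4, h5, h6, hn4]
    obtain ⟨i, hi⟩ := hex
    have hterm : ∀ k : Fin l, k ∈ univ → ((m k:ℝ)*u k)*((m k:ℝ)*u k)
        ≤ (m k:ℝ)*((n:ℝ)-(m k:ℝ))*(u k * u k) := by
      intro k _
      have hc : 2*(m k:ℝ) ≤ (n:ℝ) := by exact_mod_cast hno k
      have hnn : (0:ℝ) ≤ (m k:ℝ) := Nat.cast_nonneg _
      have hp : (0:ℝ) ≤ ((n:ℝ) - (m k:ℝ) - (m k:ℝ)) * (m k:ℝ) * (u k * u k) := by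
        apply mul_nonneg (mul_nonneg (by linarith) hnn) (mul_self_nonneg _)
      nlinarith [hp]
    have hstrict : ((m i:ℝ)*u i)*((m i:ℝ)*u i) < (m i:ℝ)*((n:ℝ)-(m i:ℝ))*(u i * u i) := by
      have h1 : 2*(m i:ℝ) < (n:ℝ) := by exact_mod_cast hi
      have h2 : 0 < u i * u i := mul_self_pos.mpr (hu0 i)
      have h3 : (0:ℝ) < (m i:ℝ) := by exact_mod_cast hm i
      have h4 : (0:ℝ) < (m i:ℝ) * (((n:ℝ) - (m i:ℝ) - (m i:ℝ))) * (u i * u i) :=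
        mul_pos (mul_pos h3 (by linarith)) h2
      nlinarith [h4]
    have hlt : ∑ k, ((m k:ℝ)*u k)*((m k:ℝ)*u k)
        < ∑ k, (m k:ℝ)*((n:ℝ)-(m k:ℝ))*(u k * u k) :=
      Finset.sum_lt_sum hterm ⟨i, mem_univ i, hstrict⟩
    have hP2 : 0 ≤ (∑ k, (m k:ℝ)*u k)*(∑ k, (m k:ℝ)*u k) := mul_self_nonneg _
    linarith [hD2, hlt, hP2]
  obtain ⟨k0, hk0⟩ := hbig
  -- l is at most 4
  have hl4 : l ≤ 4 := by
    have h1 : ∑ j ∈ univ.erase k0, m j + m k0 = n := by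
      rw [Finset.sum_erase_add _ _ (mem_univ k0), hsum]
    have h2 : (univ.erase k0).card ≤ ∑ j ∈ univ.erase k0, m j := by
      calc (univ.erase k0).card = ∑ j ∈ univ.erase k0, 1 := by
            rw [Finset.card_eq_sum_ones]
        _ ≤ ∑ j ∈ univ.erase k0, m j := Finset.sum_le_sum fun j _ => hm j
    have h3 : (univ.erase k0).card = l - 1 := by
      rw [Finset.card_erase_of_mem (mem_univ k0), Finset.card_univ, Fintype.card_fin]
    omega
  have hl34 : l = 3 ∨ l = 4 := by omega
  rcases hl34 with hl3 | hl4'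
  · subst hl3
    simp only [Fin.sum_univ_three] at hD1 hD2 hsum
    fin_cases k0
    · exact star_aux3 n (m 0) (m 1) (m 2) hn8 (by omega) hk0 (hm 1) (hm 2)
        (u 0) (u 1) (u 2) (hu0 0) (by linear_combination hD1) (by linear_combination hD2)
    · exact star_aux3 n (m 1) (m 0) (m 2) hn8 (by omega) hk0 (hm 0) (hm 2)
        (u 1) (u 0) (u 2) (hu0 1) (by linear_combination hD1) (by linear_combination hD2)
    · exact star_aux3 n (m 2) (m 0) (m 1) hn8 (by omega) hk0 (hm 0) (hm 1)
        (u 2) (u 0) (u 1) (hu0 2) (by linear_combination hD1) (by linear_combination hD2)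
  · subst hl4'
    simp only [Fin.sum_univ_four] at hD1 hD2 hsum
    fin_cases k0
    · exact star_aux4 n (m 0) (m 1) (m 2) (m 3) hn8 (by omega) hk0 (hm 1) (hm 2) (hm 3)
        (u 0) (u 1) (u 2) (u 3) (hu0 0) (by linear_combination hD1) (by linear_combination hD2)
    · exact star_aux4 n (m 1) (m 0) (m 2) (m 3) hn8 (by omega) hk0 (hm 0) (hm 2) (hm 3)
        (u 1) (u 0) (u 2) (u 3) (hu0 1) (by linear_combination hD1) (by linear_combination hD2)
    · exact star_aux4 n (m 2) (m 0) (m 1) (m 3) hn8 (by omega) hk0 (hm 0) (hm 1) (hm 3)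
        (u 2) (u 0) (u 1) (u 3) (hu0 2) (by linear_combination hD1) (by linear_combination hD2)
    · exact star_aux4 n (m 3) (m 0) (m 1) (m 2) hn8 (by omega) hk0 (hm 0) (hm 1) (hm 2)
        (u 3) (u 0) (u 1) (u 2) (hu0 3) (by linear_combination hD1) (by linear_combination hD2)
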